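/- For every integer i ≥ 3, the entries of the second upper diagonal of the matrix of moments of the Legendre polynomials are F_{i-2, i} = 2^{i-1} ((i − 1)!)² / (2i − 2)!. -/

import Mathlib

open Polynomial

/-- The n-th Legendre polynomial, defined via the Rodrigues formula
P_n(eta) = (1/(2^n n!)) d^n/d eta^n (eta^2 - 1)^n. -/
noncomputable def legendre (n : ℕ) : Polynomial ℝ :=
  ((1 : ℝ) / (2 ^ n * n.factorial)) • (Polynomial.derivative^[n] ((X ^ 2 - 1) ^ n))

/-- The matrix of moments of the Legendre polynomials:
F i j = ∫_{-1}^{1} P_{i-1}(eta) eta^{j-1} d eta (intended for i, j ≥ 1). -/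
noncomputable def Fmat (i j : ℕ) : ℝ :=
  ∫ η in (-1 : ℝ)..1, (legendre (i - 1)).eval η * η ^ (j - 1)

open intervalIntegral


set_option maxHeartbeats 1000000 in
lemma ibp (p : Polynomial ℝ) (m : ℕ) (h1 : p.eval 1 = 0) (h2 : p.eval (-1) = 0) :
    (∫ x in (-1:ℝ)..1, (derivative p).eval x * x ^ (m+1))
      = -((m:ℝ)+1) * ∫ x in (-1:ℝ)..1, p.eval x * x ^ m := by
  have hu : ∀ x ∈ Set.uIcc (-1:ℝ) 1, HasDerivAt (fun y => p.eval y) ((derivative p).eval x) x :=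
    fun x _ => p.hasDerivAt x
  have hv : ∀ x ∈ Set.uIcc (-1:ℝ) 1, HasDerivAt (fun y : ℝ => y ^ (m+1)) (((m:ℝ)+1) * x ^ m) x := by
    intro x _
    have := hasDerivAt_pow (m+1) x
    simpa using this
  have hi1 : IntervalIntegrable (fun x => (derivative p).eval x) MeasureTheory.volume (-1:ℝ) 1 :=
    ((derivative p).continuous).intervalIntegrable _ _
  have hi2 : IntervalIntegrable (fun x : ℝ => ((m:ℝ)+1) * x ^ m) MeasureTheory.volume (-1:ℝ) 1 :=
    ((continuous_const).mul (continuous_pow m)).intervalIntegrable _ _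
  have key := intervalIntegral.integral_deriv_mul_eq_sub hu hv hi1 hi2
  rw [h1, h2] at key
  simp only [zero_mul, sub_zero, zero_sub, sub_self, sub_zero] at key
  have hj1 : IntervalIntegrable (fun x : ℝ => (derivative p).eval x * x ^ (m+1))
      MeasureTheory.volume (-1:ℝ) 1 :=
    (((derivative p).continuous).mul (continuous_pow (m+1))).intervalIntegrable _ _
  have hj2 : IntervalIntegrable (fun x : ℝ => p.eval x * (((m:ℝ)+1) * x ^ m))
      MeasureTheory.volume (-1:ℝ) 1 :=
    ((p.continuous).mul ((continuous_const).mul (continuous_pow m))).intervalIntegrable _ _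
  rw [intervalIntegral.integral_add hj1 hj2] at key
  have h3 : (∫ x in (-1:ℝ)..1, p.eval x * (((m:ℝ)+1) * x ^ m))
      = ((m:ℝ)+1) * ∫ x in (-1:ℝ)..1, p.eval x * x ^ m := by
    rw [← intervalIntegral.integral_const_mul]
    congr 1; funext x; ring
  rw [h3] at key
  linarith

lemma dvd_iter (n k : ℕ) (hk : k ≤ n) :
    ∃ r : Polynomial ℝ, derivative^[k] ((X^2-1)^n) = (X^2-1)^(n-k) * r := by
  induction k with
  | zero => exact ⟨1, by simp⟩
  | succ k ih =>
    obtain ⟨r, hr⟩ := ih (Nat.le_of_succ_le hk)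
    have hnk : n - k = (n - (k+1)) + 1 := by omega
    refine ⟨C ((n - k : ℕ) : ℝ) * derivative ((X:Polynomial ℝ)^2-1) * r + (X^2-1) * derivative r, ?_⟩
    rw [Function.iterate_succ_apply', hr, derivative_mul, derivative_pow, hnk]
    simp only [Nat.add_sub_cancel]
    ring

lemma eval_iter (n k : ℕ) (hk : k < n) (x : ℝ) (hx : x^2 = 1) :
    (derivative^[k] ((X^2-1:Polynomial ℝ)^n)).eval x = 0 := by
  obtain ⟨r, hr⟩ := dvd_iter n k hk.le
  have h : n - k ≠ 0 := by omega
  rw [hr]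
  simp [hx, zero_pow h]

lemma reduce (n : ℕ) : ∀ j, j ≤ n →
    (∫ x in (-1:ℝ)..1, (derivative^[n] ((X^2-1:Polynomial ℝ)^n)).eval x * x ^ (n+2))
      = (-1)^j * (((n+2).descFactorial j : ℕ) : ℝ) *
        ∫ x in (-1:ℝ)..1, (derivative^[n-j] ((X^2-1:Polynomial ℝ)^n)).eval x * x ^ (n+2-j) := by
  intro j
  induction j with
  | zero => simp
  | succ j ih =>
    intro hj
    rw [ih (by omega)]
    have h1 : n - j = (n - (j+1)) + 1 := by omega
    have h2 : n + 2 - j = (n + 2 - (j+1)) + 1 := by omega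
    have h3 : n - (j+1) < n := by omega
    have key : (∫ x in (-1:ℝ)..1, (derivative^[n-j] ((X^2-1:Polynomial ℝ)^n)).eval x * x ^ (n+2-j))
        = -(((n+2-(j+1) : ℕ) : ℝ)+1) *
          ∫ x in (-1:ℝ)..1, (derivative^[n-(j+1)] ((X^2-1:Polynomial ℝ)^n)).eval x * x ^ (n+2-(j+1)) := by
      rw [h1, h2, Function.iterate_succ_apply']
      exact ibp _ _ (eval_iter n _ h3 1 (by norm_num)) (eval_iter n _ h3 (-1) (by norm_num))
    rw [key]
    have hd : (((n+2).descFactorial (j+1) : ℕ) : ℝ)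
        = (((n+2-(j+1) : ℕ) : ℝ) + 1) * (((n+2).descFactorial j : ℕ) : ℝ) := by
      rw [Nat.descFactorial_succ]
      push_cast [show (n + 2 - j : ℕ) = (n + 2 - (j+1)) + 1 by omega]
      ring
    rw [hd]
    ring

lemma poly_id (n : ℕ) :
    derivative ((X:Polynomial ℝ) * (X^2-1)^(n+1))
      = C ((2*n+3 : ℕ) : ℝ) * (X^2-1)^(n+1) + C ((2*n+2 : ℕ) : ℝ) * (X^2-1)^n := by
  rw [derivative_mul, derivative_pow, derivative_X]
  simp only [Nat.add_sub_cancel, derivative_sub, derivative_one, derivative_X_pow,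
    map_natCast]
  push_cast
  ring

lemma A_val (n : ℕ) :
    (∫ x in (-1:ℝ)..1, ((X^2-1:Polynomial ℝ)^n).eval x)
      = (-1)^n * 2^(2*n+1) * (n.factorial : ℝ)^2 / ((2*n+1).factorial : ℝ) := by
  induction n with
  | zero => norm_num
  | succ n ih =>
    -- from FTC: ∫ derivative of X*(X^2-1)^(n+1) = 0
    set p : Polynomial ℝ := (X:Polynomial ℝ) * (X^2-1)^(n+1) with hp
    have hzero : (∫ x in (-1:ℝ)..1, (derivative p).eval x) = p.eval 1 - p.eval (-1) := by
      exact intervalIntegral.integral_eq_sub_of_hasDerivAt (f := fun x => p.eval x)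
        (fun x _ => p.hasDerivAt x) (((derivative p).continuous).intervalIntegrable _ _)
    have hbd : p.eval 1 - p.eval (-1) = 0 := by simp [hp]
    have heq : ∀ x : ℝ, (derivative p).eval x
        = ((2*n+3 : ℕ) : ℝ) * ((X^2-1:Polynomial ℝ)^(n+1)).eval x
          + ((2*n+2 : ℕ) : ℝ) * ((X^2-1:Polynomial ℝ)^n).eval x := by
      intro x
      rw [hp, poly_id n]
      simp
    have hi1 : IntervalIntegrable (fun x : ℝ => ((2*n+3 : ℕ) : ℝ) * ((X^2-1:Polynomial ℝ)^(n+1)).eval x)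
        MeasureTheory.volume (-1:ℝ) 1 :=
      (continuous_const.mul (((X^2-1:Polynomial ℝ)^(n+1)).continuous)).intervalIntegrable _ _
    have hi2 : IntervalIntegrable (fun x : ℝ => ((2*n+2 : ℕ) : ℝ) * ((X^2-1:Polynomial ℝ)^n).eval x)
        MeasureTheory.volume (-1:ℝ) 1 :=
      (continuous_const.mul (((X^2-1:Polynomial ℝ)^n).continuous)).intervalIntegrable _ _
    have hsum : ((2*n+3 : ℕ) : ℝ) * (∫ x in (-1:ℝ)..1, ((X^2-1:Polynomial ℝ)^(n+1)).eval x)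
        + ((2*n+2 : ℕ) : ℝ) * (∫ x in (-1:ℝ)..1, ((X^2-1:Polynomial ℝ)^n).eval x) = 0 := by
      rw [← intervalIntegral.integral_const_mul, ← intervalIntegral.integral_const_mul,
        ← intervalIntegral.integral_add hi1 hi2]
      rw [hbd] at hzero
      rw [← hzero]
      apply intervalIntegral.integral_congr
      intro x _
      exact (heq x).symm
    rw [ih] at hsum
    have h23 : ((2*n+3 : ℕ) : ℝ) ≠ 0 := by positivity
    have hfact : ((2*n+1).factorial : ℝ) ≠ 0 := Nat.cast_ne_zero.2 (Nat.factorial_ne_zero _)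
    have hfact2 : ((2*(n+1)+1).factorial : ℝ)
        = ((2*n+3 : ℕ) : ℝ) * (((2*n+2 : ℕ) : ℝ) * ((2*n+1).factorial : ℝ)) := by
      rw [show 2*(n+1)+1 = (2*n+2)+1 by ring, Nat.factorial_succ,
        show 2*n+2 = (2*n+1)+1 by ring, Nat.factorial_succ]
      push_cast
      ring
    have hfs : ((n+1).factorial : ℝ) = ((n:ℝ)+1) * (n.factorial : ℝ) := by
      rw [Nat.factorial_succ]; push_cast; ring
    rw [show 2*(n+1)+1 = 2*n+3 by ring] at hfact2 ⊢
    rw [hfact2, hfs]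
    field_simp at hsum ⊢
    -- done
    push_cast at hsum ⊢
    linear_combination (2*(n:ℝ)+2) * hsum



lemma arith (n : ℕ) (s : ℝ) (hs : s * s = 1) :
    (1 : ℝ) / (2 ^ n * n.factorial) * (s * ((Nat.descFactorial (n+2) n : ℕ) : ℝ) *
      (s * (-1) * 2^(2*(n+1)+1) * ((n+1).factorial : ℝ)^2 / ((2*(n+1)+1).factorial : ℝ)
        + s * 2^(2*n+1) * (n.factorial : ℝ)^2 / ((2*n+1).factorial : ℝ)))
      = 2^(n+2) * ((n+2).factorial : ℝ)^2 / ((2*n+4).factorial : ℝ) := by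
  have hD : ((Nat.descFactorial (n+2) n : ℕ) : ℝ)
      = ((n:ℝ)+2) * ((n:ℝ)+1) * (n.factorial : ℝ) / 2 := by
    have h := Nat.factorial_mul_descFactorial (show n ≤ n+2 by omega)
    rw [show n+2-n = 2 by omega] at h
    have h2 : ((2:ℕ).factorial * Nat.descFactorial (n+2) n : ℕ) = ((n+2).factorial : ℕ) := h
    have h3 : ((2:ℝ)) * ((Nat.descFactorial (n+2) n : ℕ) : ℝ) = ((n+2).factorial : ℝ) := by
      exact_mod_cast congrArg (Nat.cast (R := ℝ)) h2
    have h4 : ((n+2).factorial : ℝ) = ((n:ℝ)+2) * (((n:ℝ)+1) * (n.factorial : ℝ)) := by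
      rw [Nat.factorial_succ, Nat.factorial_succ]; push_cast; ring
    rw [h4] at h3
    linarith
  have hf1 : ((n+1).factorial : ℝ) = ((n:ℝ)+1) * (n.factorial : ℝ) := by
    rw [Nat.factorial_succ]; push_cast; ring
  have hf2 : ((n+2).factorial : ℝ) = ((n:ℝ)+2) * (((n:ℝ)+1) * (n.factorial : ℝ)) := by
    rw [Nat.factorial_succ, Nat.factorial_succ]; push_cast; ring
  have hf3 : ((2*(n+1)+1).factorial : ℝ)
      = (2*(n:ℝ)+3) * ((2*(n:ℝ)+2) * ((2*n+1).factorial : ℝ)) := by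
    rw [show 2*(n+1)+1 = (2*n+2)+1 by ring, Nat.factorial_succ,
      show 2*n+2 = (2*n+1)+1 by ring, Nat.factorial_succ]
    push_cast; ring
  have hf4 : ((2*n+4).factorial : ℝ)
      = (2*(n:ℝ)+4) * ((2*(n:ℝ)+3) * ((2*(n:ℝ)+2) * ((2*n+1).factorial : ℝ))) := by
    rw [show 2*n+4 = (2*n+3)+1 by ring, Nat.factorial_succ,
      show 2*n+3 = (2*n+2)+1 by ring, Nat.factorial_succ,
      show 2*n+2 = (2*n+1)+1 by ring, Nat.factorial_succ]
    push_cast; ring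
  rw [hD, hf1, hf2, hf3, hf4]
  have hF : (n.factorial : ℝ) ≠ 0 := Nat.cast_ne_zero.2 (Nat.factorial_ne_zero _)
  have hN : ((2*n+1).factorial : ℝ) ≠ 0 := Nat.cast_ne_zero.2 (Nat.factorial_ne_zero _)
  have h2n : (2:ℝ)^n ≠ 0 := by positivity
  field_simp
  ring_nf
  linear_combination (2^(n*2) * (8*(n:ℝ) + 16)) * hs


lemma key (n : ℕ) :
    (∫ x in (-1:ℝ)..1, (legendre n).eval x * x ^ (n+2))
      = 2^(n+2) * ((n+2).factorial : ℝ)^2 / ((2*n+4).factorial : ℝ) := by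
  have hpull : (∫ x in (-1:ℝ)..1, (legendre n).eval x * x ^ (n+2))
      = ((1 : ℝ) / (2 ^ n * n.factorial)) *
        ∫ x in (-1:ℝ)..1, (derivative^[n] ((X^2-1:Polynomial ℝ)^n)).eval x * x ^ (n+2) := by
    rw [← intervalIntegral.integral_const_mul]
    apply intervalIntegral.integral_congr
    intro x _
    simp [legendre, mul_assoc]
  rw [hpull, reduce n n le_rfl]
  have hsub : n - n = 0 := Nat.sub_self n
  have hsub2 : n + 2 - n = 2 := by omega
  rw [hsub, hsub2]
  simp only [Function.iterate_zero, id_eq]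
  -- split the remaining integral
  have hBsplit : (∫ x in (-1:ℝ)..1, ((X^2-1:Polynomial ℝ)^n).eval x * x ^ 2)
      = (∫ x in (-1:ℝ)..1, ((X^2-1:Polynomial ℝ)^(n+1)).eval x)
        + ∫ x in (-1:ℝ)..1, ((X^2-1:Polynomial ℝ)^n).eval x := by
    rw [← intervalIntegral.integral_add ((((X^2-1:Polynomial ℝ)^(n+1)).continuous).intervalIntegrable _ _)
      ((((X^2-1:Polynomial ℝ)^n).continuous).intervalIntegrable _ _)]
    apply intervalIntegral.integral_congr
    intro x _
    simp only [eval_pow, eval_sub, eval_one, eval_X]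
    ring
  rw [hBsplit, A_val, A_val, pow_succ]
  have hneg : ((-1:ℝ))^n * (-1)^n = 1 := by
    rw [← pow_add, ← two_mul, pow_mul]; norm_num
  exact arith n ((-1:ℝ)^n) hneg

lemma legendre_integral_final (i : ℕ) (hi : 3 ≤ i) :
    (∫ η in (-1 : ℝ)..1, (legendre (i - 2 - 1)).eval η * η ^ (i - 1))
      = 2 ^ (i - 1) * ((i - 1).factorial : ℝ) ^ 2 / ((2 * i - 2).factorial : ℝ) := by
  obtain ⟨n, rfl⟩ : ∃ n, i = n + 3 := ⟨i - 3, by omega⟩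
  rw [show n + 3 - 2 - 1 = n by omega, show n + 3 - 1 = n + 2 by omega,
    show 2 * (n + 3) - 2 = 2 * n + 4 by omega]
  exact key n

/-- The second upper diagonal: F_{i-2,i} = 2^{i-1} ((i-1)!)^2 / (2i-2)! for i ≥ 3. -/
theorem stmt_8 (i : ℕ) (hi : 3 ≤ i) :
    Fmat (i - 2) i = 2 ^ (i - 1) * ((i - 1).factorial : ℝ) ^ 2 /
      ((2 * i - 2).factorial : ℝ) := by
  unfold Fmat
  exact legendre_integral_final i hi
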